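/- Let a, v, w ∈ ℝ^d have strictly positive coordinates, let α ∈ (0,1), and let D be a nonempty relatively open subset of the open unit simplex Δ such that log(aᵀx) = α log(vᵀx) + (1−α) log(wᵀx) for every x ∈ D. Then there exist constants c₁, c₂ > 0 such that a = c₁ v and a = c₂ w. -/

import Mathlib

open scoped BigOperators

/-- The open unit simplex in `ℝ^d`. -/
def openSimplex (d : ℕ) : Set (Fin d → ℝ) :=
  {x | (∀ i, 0 < x i) ∧ ∑ i, x i = 1}

/-- Core 1-dimensional lemma: if `α log(V+pt) + (1-α) log(W+qt) = log(A+rt)` on an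
interval around 0, then the logarithmic derivatives at 0 agree. -/
lemma statement7_core {α A₀ V₀ W₀ p q r ε : ℝ} (hα : α ∈ Set.Ioo (0:ℝ) 1) (hε : 0 < ε)
    (hpos : ∀ t ∈ Set.Ioo (-ε) ε, 0 < V₀ + p*t ∧ 0 < W₀ + q*t ∧ 0 < A₀ + r*t)
    (heq : ∀ t ∈ Set.Ioo (-ε) ε,
      Real.log (A₀ + r*t) = α * Real.log (V₀ + p*t) + (1-α) * Real.log (W₀ + q*t)) :
    p * A₀ = r * V₀ ∧ q * A₀ = r * W₀ := by
  have h0 : (0:ℝ) ∈ Set.Ioo (-ε) ε := by constructor <;> [linarith; linarith]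
  obtain ⟨hV, hW, hA⟩ := hpos 0 h0
  simp only [mul_zero, add_zero] at hV hW hA
  set g : ℝ → ℝ := fun t => α * (p / (V₀ + p*t)) + (1-α) * (q / (W₀ + q*t)) - r / (A₀ + r*t)
    with hg_def
  -- derivative of affine maps
  have haff : ∀ (b c t : ℝ), HasDerivAt (fun s => b + c*s) c t := by
    intro b c t
    simpa using ((hasDerivAt_id t).const_mul c).const_add b
  -- g is the derivative of the log combination
  have hgderiv : ∀ t ∈ Set.Ioo (-ε) ε,
      HasDerivAt (fun s => α * Real.log (V₀ + p*s) + (1-α) * Real.log (W₀ + q*s)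
        - Real.log (A₀ + r*s)) (g t) t := by
    intro t ht
    obtain ⟨hVt, hWt, hAt⟩ := hpos t ht
    have h1 : HasDerivAt (fun s => Real.log (V₀ + p*s)) ((V₀ + p*t)⁻¹ * p) t :=
      by have := (Real.hasDerivAt_log hVt.ne').comp t (haff V₀ p t); exact this
    have h2 : HasDerivAt (fun s => Real.log (W₀ + q*s)) ((W₀ + q*t)⁻¹ * q) t :=
      by have := (Real.hasDerivAt_log hWt.ne').comp t (haff W₀ q t); exact this
    have h3 : HasDerivAt (fun s => Real.log (A₀ + r*s)) ((A₀ + r*t)⁻¹ * r) t :=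
      by have := (Real.hasDerivAt_log hAt.ne').comp t (haff A₀ r t); exact this
    have := ((h1.const_mul α).add (h2.const_mul (1-α))).sub h3
    refine this.congr_deriv ?_
    simp only [hg_def]
    field_simp
  -- the log combination vanishes on the interval, hence g vanishes on the interval
  have hgzero : ∀ t ∈ Set.Ioo (-ε) ε, g t = 0 := by
    intro t ht
    have hev : (fun s => α * Real.log (V₀ + p*s) + (1-α) * Real.log (W₀ + q*s)
        - Real.log (A₀ + r*s)) =ᶠ[nhds t] (fun _ => (0:ℝ)) := by
      filter_upwards [isOpen_Ioo.mem_nhds ht] with s hs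
      have := heq s hs
      linarith
    have hz : HasDerivAt (fun s => α * Real.log (V₀ + p*s) + (1-α) * Real.log (W₀ + q*s)
        - Real.log (A₀ + r*s)) 0 t :=
      (hasDerivAt_const t (0:ℝ)).congr_of_eventuallyEq hev
    exact (hgderiv t ht).unique hz
  -- g has a derivative at 0, which must vanish
  have hg'deriv : HasDerivAt g
      (α * ((0 * V₀ - p * p) / V₀^2) + (1-α) * ((0 * W₀ - q * q) / W₀^2)
        - (0 * A₀ - r * r) / A₀^2) 0 := by
    have h1 : HasDerivAt (fun s => p / (V₀ + p*s)) ((0 * (V₀ + p*0) - p * p) / (V₀ + p*0)^2) 0 :=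
      (hasDerivAt_const 0 p).div (haff V₀ p 0) (by simpa using hV.ne')
    have h2 : HasDerivAt (fun s => q / (W₀ + q*s)) ((0 * (W₀ + q*0) - q * q) / (W₀ + q*0)^2) 0 :=
      (hasDerivAt_const 0 q).div (haff W₀ q 0) (by simpa using hW.ne')
    have h3 : HasDerivAt (fun s => r / (A₀ + r*s)) ((0 * (A₀ + r*0) - r * r) / (A₀ + r*0)^2) 0 :=
      (hasDerivAt_const 0 r).div (haff A₀ r 0) (by simpa using hA.ne')
    simp only [mul_zero, add_zero] at h1 h2 h3
    exact ((h1.const_mul α).add (h2.const_mul (1-α))).sub h3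
  have hg'zero : HasDerivAt g 0 0 := by
    have hev : g =ᶠ[nhds 0] (fun _ => (0:ℝ)) := by
      filter_upwards [isOpen_Ioo.mem_nhds h0] with s hs using hgzero s hs
    exact (hasDerivAt_const 0 (0:ℝ)).congr_of_eventuallyEq hev
  have e2' := hg'deriv.unique hg'zero
  have e1' := hgzero 0 h0
  simp only [hg_def, mul_zero, add_zero] at e1'
  -- translate to P, Q, R
  set P := p / V₀ with hP
  set Q := q / W₀ with hQ
  set R := r / A₀ with hR
  have e1 : α * P + (1-α) * Q - R = 0 := e1'
  have e2 : -(α * P^2) - (1-α) * Q^2 + R^2 = 0 := by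
    have hp2 : (0 * V₀ - p * p) / V₀^2 = -(P^2) := by
      rw [hP, div_pow]; field_simp; ring
    have hq2 : (0 * W₀ - q * q) / W₀^2 = -(Q^2) := by
      rw [hQ, div_pow]; field_simp; ring
    have hr2 : (0 * A₀ - r * r) / A₀^2 = -(R^2) := by
      rw [hR, div_pow]; field_simp; ring
    rw [hp2, hq2, hr2] at e2'
    linarith [e2']
  have hα0 : 0 < α := hα.1
  have hα1 : 0 < 1 - α := by have := hα.2; linarith
  have hRval : R = α * P + (1 - α) * Q := by linarith
  rw [hRval] at e2
  have hsq : (P - Q) ^ 2 = 0 := by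
    have hpos := mul_pos hα0 hα1
    nlinarith [sq_nonneg (P - Q)]
  have hPQ : P = Q := by
    have := sq_eq_zero_iff.mp hsq
    linarith
  have hPR : P = R := by rw [hRval, hPQ]; ring
  constructor
  · have : p / V₀ = r / A₀ := hPR
    rw [div_eq_div_iff hV.ne' hA.ne'] at this
    linarith
  · have hQR : Q = R := by rw [← hPQ]; exact hPR
    rw [hQ, hR] at hQR
    rw [div_eq_div_iff hW.ne' hA.ne'] at hQR
    linarith

lemma statement7_sumlin {d : ℕ} (x c : Fin d → ℝ) (K ci : ℝ) :
    ∑ j, ((ci - c j) * K) * x j = ci * K * (∑ j, x j) - K * (∑ j, c j * x j) := by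
  rw [Finset.mul_sum, Finset.mul_sum, ← Finset.sum_sub_distrib]
  exact Finset.sum_congr rfl (fun j _ => by ring)

/-- if `log(aᵀx) = α log(vᵀx) + (1-α) log(wᵀx)` on a nonempty relatively open
subset `D` of the open simplex, with `a, v, w` having strictly positive coordinates and
`α ∈ (0,1)`, then `a` is a positive multiple of both `v` and `w`. -/
theorem statement7 {d : ℕ} (hd : 2 ≤ d)
    (a v w : Fin d → ℝ)
    (ha : ∀ i, 0 < a i) (hv : ∀ i, 0 < v i) (hw : ∀ i, 0 < w i)
    (α : ℝ) (hα : α ∈ Set.Ioo (0:ℝ) 1)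
    (D : Set (Fin d → ℝ)) (hDne : D.Nonempty)
    (hDopen : ∃ U : Set (Fin d → ℝ), IsOpen U ∧ D = U ∩ openSimplex d)
    (heq : ∀ x ∈ D,
      Real.log (∑ i, a i * x i)
        = α * Real.log (∑ i, v i * x i) + (1 - α) * Real.log (∑ i, w i * x i)) :
    ∃ c₁ c₂ : ℝ, 0 < c₁ ∧ 0 < c₂ ∧ (∀ i, a i = c₁ * v i) ∧ (∀ i, a i = c₂ * w i) := by
  haveI : NeZero d := ⟨by omega⟩
  obtain ⟨U, hUopen, hDU⟩ := hDopen
  obtain ⟨x₀, hx₀D⟩ := hDne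
  have hx₀U : x₀ ∈ U := (hDU ▸ hx₀D).1
  have hx₀S : x₀ ∈ openSimplex d := (hDU ▸ hx₀D).2
  obtain ⟨hx₀pos, hx₀sum⟩ := hx₀S
  set A₀ := ∑ k, a k * x₀ k with hA₀
  set V₀ := ∑ k, v k * x₀ k with hV₀
  set W₀ := ∑ k, w k * x₀ k with hW₀
  have hne : (Finset.univ : Finset (Fin d)).Nonempty := Finset.univ_nonempty
  have hsumpos : ∀ (c : Fin d → ℝ), (∀ k, 0 < c k) → ∀ (y : Fin d → ℝ), (∀ k, 0 < y k) →
      0 < ∑ k, c k * y k := fun c hc y hy =>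
    Finset.sum_pos (fun k _ => mul_pos (hc k) (hy k)) hne
  have hApos : 0 < A₀ := hsumpos a ha x₀ hx₀pos
  have hVpos : 0 < V₀ := hsumpos v hv x₀ hx₀pos
  have hWpos : 0 < W₀ := hsumpos w hw x₀ hx₀pos
  -- key: for all i j, cross-multiplied proportionality of increments
  have key : ∀ i j : Fin d, (v i - v j) * A₀ = (a i - a j) * V₀ ∧
      (w i - w j) * A₀ = (a i - a j) * W₀ := by
    intro i j
    set u : Fin d → ℝ := fun k => (if k = i then (1:ℝ) else 0) - (if k = j then 1 else 0)
      with hu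
    set γ : ℝ → (Fin d → ℝ) := fun t k => x₀ k + t * u k with hγ
    have husum : ∑ k, u k = 0 := by
      simp [hu, Finset.sum_sub_distrib]
    have hdot : ∀ (c : Fin d → ℝ) (t : ℝ),
        ∑ k, c k * γ t k = (∑ k, c k * x₀ k) + (c i - c j) * t := by
      intro c t
      have : ∀ k, c k * γ t k = c k * x₀ k + t * (c k * u k) := by
        intro k; simp only [hγ]; ring
      rw [Finset.sum_congr rfl (fun k _ => this k), Finset.sum_add_distrib,
        ← Finset.mul_sum]
      have : ∑ k, c k * u k = c i - c j := by
        simp [hu, mul_sub, Finset.sum_sub_distrib, mul_ite, mul_one, mul_zero]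
      rw [this]; ring
    have hγcont : Continuous γ := by
      apply continuous_pi
      intro k
      exact continuous_const.add (continuous_id.mul continuous_const)
    set S : Set ℝ := {t | γ t ∈ U ∧ ∀ k, 0 < γ t k} with hS
    have hSopen : IsOpen S := by
      have h1 : IsOpen {t | γ t ∈ U} := hUopen.preimage hγcont
      have h2 : IsOpen {t | ∀ k, 0 < γ t k} := by
        have : {t | ∀ k, 0 < γ t k} = ⋂ k, {t | 0 < γ t k} := by
          ext t; simp [Set.mem_iInter]
        rw [this]
        exact isOpen_iInter_of_finite fun k =>
          isOpen_lt continuous_const ((continuous_apply k).comp hγcont)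
      exact h1.inter h2
    have h0S : (0:ℝ) ∈ S := by
      have : γ 0 = x₀ := by funext k; simp [hγ]
      constructor <;> rw [this]
      · exact hx₀U
      · exact hx₀pos
    obtain ⟨ε, hε, hball⟩ := Metric.isOpen_iff.mp hSopen 0 h0S
    have hmem : ∀ t ∈ Set.Ioo (-ε) ε, γ t ∈ D := by
      intro t ht
      have htS : t ∈ S := hball (by
        simp only [Metric.mem_ball, Real.dist_eq, sub_zero]
        exact abs_lt.mpr ⟨ht.1, ht.2⟩)
      rw [hDU]
      refine ⟨htS.1, htS.2, ?_⟩
      have : ∑ k, γ t k = (∑ k, x₀ k) + t * (∑ k, u k) := by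
        simp only [hγ, Finset.sum_add_distrib, Finset.mul_sum]
      rw [this, husum, hx₀sum]; ring
    have hcore := statement7_core (α := α) (A₀ := A₀) (V₀ := V₀) (W₀ := W₀)
        (p := v i - v j) (q := w i - w j) (r := a i - a j) (ε := ε) hα hε
      (by
        intro t ht
        have hD := hmem t ht
        have hγpos : ∀ k, 0 < γ t k := by
          rw [hDU] at hD; exact hD.2.1
        refine ⟨?_, ?_, ?_⟩
        · have := hsumpos v hv (γ t) hγpos
          rwa [hdot v t] at this
        · have := hsumpos w hw (γ t) hγpos
          rwa [hdot w t] at this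
        · have := hsumpos a ha (γ t) hγpos
          rwa [hdot a t] at this)
      (by
        intro t ht
        have := heq (γ t) (hmem t ht)
        rwa [hdot a t, hdot v t, hdot w t] at this)
    exact hcore
  -- sum the key relation against x₀ to get coordinatewise proportionality
  have hlin : ∀ (c : Fin d → ℝ) (C : ℝ) (i : Fin d),
      (∑ j, c j * x₀ j) = C → (∀ j, (c i - c j) * A₀ = (a i - a j) * C) →
      c i * A₀ = a i * C := by
    intro c C i hC hrel
    have h := Finset.sum_congr rfl (fun j (_ : j ∈ Finset.univ) =>
      congrArg (· * x₀ j) (hrel j))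
    have l1 := statement7_sumlin x₀ c A₀ (c i)
    have l2 := statement7_sumlin x₀ a C (a i)
    rw [l1, l2, hx₀sum, hC, ← hA₀] at h
    nlinarith [h]
  have hvA : ∀ i, v i * A₀ = a i * V₀ :=
    fun i => hlin v V₀ i rfl (fun j => (key i j).1)
  have hwA : ∀ i, w i * A₀ = a i * W₀ :=
    fun i => hlin w W₀ i rfl (fun j => (key i j).2)
  refine ⟨A₀ / V₀, A₀ / W₀, div_pos hApos hVpos, div_pos hApos hWpos, ?_, ?_⟩
  · intro i
    rw [div_mul_eq_mul_div, eq_div_iff hVpos.ne']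
    linarith [hvA i]
  · intro i
    rw [div_mul_eq_mul_div, eq_div_iff hWpos.ne']
    linarith [hwA i]
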